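/- Let P_γ be a sub-spherical family on ℝⁿ, X₁, X₂ ⊂ ℝⁿ nonempty closed convex disjoint sets with at least one bounded, δ, s* the associated Euclidean-separation entities, and ε⋆ = ∫_δ^∞ γ(s)ds. Consider the K-observation majority test T^maj_K which, given the stationary K-repeated observations ω_k = x + ξ_k (k = 1, …, K) with ξ_k i.i.d. ∼ p ∈ P_γ, accepts H₁ : x ∈ X₁ when s*(ω_k) ≥ 0 for at least K/2 values of k, and accepts H₂ : x ∈ X₂ otherwise. Then the risk of T^maj_K, i.e., the maximum over χ ∈ {1,2} of sup_{x ∈ X_χ, p ∈ P_γ} of the probability that T^maj_K rejects H_χ, is at most Σ_{K ≥ k ≥ K/2} C(K,k) ε⋆^k (1 − ε⋆)^{K−k}. -/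

import Mathlib

open MeasureTheory Matrix
open scoped Classical

noncomputable section

/-- `p` is a probability density on `ℝⁿ` (w.r.t. Lebesgue measure). -/
def IsDensity {n : ℕ} (p : (Fin n → ℝ) → ℝ) : Prop :=
  (∀ x, 0 ≤ p x) ∧ (∫ x, p x) = 1

/-- `p` is an even function on `ℝⁿ`. -/
def IsEvenFn {n : ℕ} (p : (Fin n → ℝ) → ℝ) : Prop := ∀ x, p (-x) = p x

/-- `γ` is a probability density on `ℝ`. -/
def IsDensity1 (γ : ℝ → ℝ) : Prop := (∀ s, 0 ≤ γ s) ∧ (∫ s, γ s) = 1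

/-- `γ` is an even probability density on `ℝ`, positive in a neighbourhood of `0`. -/
def IsSpec (γ : ℝ → ℝ) : Prop :=
  IsDensity1 γ ∧ (∀ s, γ (-s) = γ s) ∧ ∃ ε > 0, ∀ s, |s| < ε → 0 < γ s

/-- `P_γ(δ) = ∫_δ^∞ γ(s) ds`. -/
def tailP (γ : ℝ → ℝ) (δ : ℝ) : ℝ := ∫ s in Set.Ici δ, γ s

/-- Membership of the density `p` in the sub-spherical family `P_γ^n`. -/
def SubSpherical {n : ℕ} (γ : ℝ → ℝ) (p : (Fin n → ℝ) → ℝ) : Prop :=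
  IsDensity p ∧ IsEvenFn p ∧
  ∀ e : Fin n → ℝ, e ⬝ᵥ e = 1 → ∀ δ : ℝ, 0 ≤ δ →
    (∫ ξ in {ξ | δ ≤ e ⬝ᵥ ξ}, p ξ) ≤ tailP γ δ

/-- The measure on `ℝⁿ` with density `p` w.r.t. Lebesgue measure. -/
def dMeas {n : ℕ} (p : (Fin n → ℝ) → ℝ) : Measure (Fin n → ℝ) :=
  volume.withDensity fun x => ENNReal.ofReal (p x)

/-- The measure on `ℝ` with density `γ` w.r.t. Lebesgue measure. -/
def dMeas1 (γ : ℝ → ℝ) : Measure ℝ :=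
  volume.withDensity fun s => ENNReal.ofReal (γ s)

section AuxLemmas
open Finset

def binTail (K m : ℕ) (p : ℝ) : ℝ :=
  ∑ k ∈ Finset.Icc m K, (K.choose k : ℝ) * p ^ k * (1 - p) ^ (K - k)

lemma binTail_nonneg {K m : ℕ} {p : ℝ} (h0 : 0 ≤ p) (h1 : p ≤ 1) : 0 ≤ binTail K m p := by
  refine Finset.sum_nonneg fun k _ => ?_
  have h1' : (0:ℝ) ≤ 1 - p := by linarith
  positivity

lemma binTail_zero (K : ℕ) (p : ℝ) : binTail K 0 p = 1 := by
  have h := add_pow p (1 - p) K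
  have : p + (1 - p) = 1 := by ring
  rw [this, one_pow] at h
  rw [binTail]
  rw [show Finset.Icc 0 K = Finset.range (K + 1) by ext k; simp]
  refine Eq.trans (Finset.sum_congr rfl fun k _ => ?_) h.symm
  ring

lemma binTail_anti {K m m' : ℕ} (hm : m ≤ m') {p : ℝ} (h0 : 0 ≤ p) (h1 : p ≤ 1) :
    binTail K m' p ≤ binTail K m p := by
  refine Finset.sum_le_sum_of_subset_of_nonneg (Finset.Icc_subset_Icc_left hm) fun k _ _ => ?_
  have h1' : (0:ℝ) ≤ 1 - p := by linarith
  positivity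

lemma binTail_succ (K m : ℕ) (hm : 1 ≤ m) (p : ℝ) :
    binTail (K + 1) m p = p * binTail K (m - 1) p + (1 - p) * binTail K m p := by
  by_cases hK : m ≤ K + 1
  · have hmap : Finset.Icc m (K + 1) = (Finset.Icc (m-1) K).map (addRightEmbedding 1) := by
      rw [map_add_right_Icc]
      congr 1 <;> omega
    have key : binTail (K+1) m p
        = ∑ j ∈ Finset.Icc (m-1) K, ((K+1).choose (j+1) : ℝ) * p ^ (j+1) * (1-p) ^ (K - j) := by
      rw [binTail, hmap, Finset.sum_map]
      refine Finset.sum_congr rfl fun j hj => ?_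
      simp only [addRightEmbedding_apply]
      congr 2
      omega
    have split : ∀ j ∈ Finset.Icc (m-1) K,
        ((K+1).choose (j+1) : ℝ) * p ^ (j+1) * (1-p) ^ (K - j)
        = p * ((K.choose j : ℝ) * p ^ j * (1-p) ^ (K - j))
          + (K.choose (j+1) : ℝ) * p ^ (j+1) * (1-p) ^ (K - j) := by
      intro j hj
      rw [Nat.choose_succ_succ]
      push_cast
      ring
    have hsecond : (∑ j ∈ Finset.Icc (m-1) K, (K.choose (j+1) : ℝ) * p ^ (j+1) * (1-p) ^ (K - j))
        = (1 - p) * binTail K m p := by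
      have hmap2 : ∑ j ∈ Finset.Icc (m-1) K, (K.choose (j+1) : ℝ) * p ^ (j+1) * (1-p) ^ (K - j)
          = ∑ k ∈ Finset.Icc m (K+1), (K.choose k : ℝ) * p ^ k * (1-p) ^ (K + 1 - k) := by
        rw [hmap, Finset.sum_map]
        refine Finset.sum_congr rfl fun j hj => ?_
        simp only [addRightEmbedding_apply]
        congr 2
        omega
      rw [hmap2, Finset.sum_Icc_succ_top hK]
      have : (K.choose (K+1) : ℝ) = 0 := by simp
      rw [this]
      simp only [zero_mul, mul_zero, add_zero]
      rw [binTail, Finset.mul_sum]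
      refine Finset.sum_congr rfl fun k hk => ?_
      have hkK : k ≤ K := (Finset.mem_Icc.1 hk).2
      have : K + 1 - k = (K - k) + 1 := by omega
      rw [this]
      ring
    rw [key, Finset.sum_congr rfl split, Finset.sum_add_distrib, hsecond, ← Finset.mul_sum]
    rfl
  · have e1 : Finset.Icc m (K+1) = ∅ := Finset.Icc_eq_empty (by omega)
    have e2 : Finset.Icc (m-1) K = ∅ := Finset.Icc_eq_empty (by omega)
    have e3 : Finset.Icc m K = ∅ := Finset.Icc_eq_empty (by omega)
    simp [binTail, e1, e2, e3]

lemma binTail_mono (K : ℕ) {q ε : ℝ} (h0 : 0 ≤ q) (hqε : q ≤ ε) (hε1 : ε ≤ 1) :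
    ∀ m, binTail K m q ≤ binTail K m ε := by
  have hq1 : q ≤ 1 := le_trans hqε hε1
  have hε0 : 0 ≤ ε := le_trans h0 hqε
  induction K with
  | zero =>
    intro m
    rcases m with _ | m
    · simp [binTail]
    · simp [binTail, Finset.Icc_eq_empty (by omega : ¬ m + 1 ≤ 0)]
  | succ K ih =>
    intro m
    rcases m with _ | m
    · rw [binTail_zero, binTail_zero]
    · rw [binTail_succ K (m+1) (by omega), binTail_succ K (m+1) (by omega)]
      simp only [Nat.add_sub_cancel]
      have hba : binTail K (m+1) q ≤ binTail K m q := binTail_anti (by omega) h0 hq1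
      have ha := ih m
      have hb := ih (m+1)
      nlinarith [mul_nonneg (sub_nonneg.2 hqε) (sub_nonneg.2 hba),
        mul_nonneg hε0 (sub_nonneg.2 ha), mul_nonneg (sub_nonneg.2 hε1) (sub_nonneg.2 hb)]

lemma majority_bound {α : Type*} [MeasurableSpace α] (μ : Measure α) [IsProbabilityMeasure μ]
    (K : ℕ) {B : Set α} (hB : MeasurableSet B) {ε : ℝ} (hε0 : 0 ≤ ε) (hε1 : ε ≤ 1)
    (hq : μ B ≤ ENNReal.ofReal ε) :
    (Measure.pi fun _ : Fin K => μ)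
      {ξ : Fin K → α | K ≤ 2 * (Finset.univ.filter fun k => ξ k ∈ B).card}
      ≤ ENNReal.ofReal (binTail K ((K + 1) / 2) ε) := by
  classical
  set q : ℝ := (μ B).toReal with hqdef
  have hμB1 : μ B ≤ 1 := prob_le_one
  have hμBne : μ B ≠ ⊤ := ne_top_of_le_ne_top ENNReal.one_ne_top hμB1
  have hq0 : 0 ≤ q := ENNReal.toReal_nonneg
  have hq1 : q ≤ 1 := by
    have := ENNReal.toReal_mono ENNReal.one_ne_top hμB1
    simpa using this
  have hqε : q ≤ ε := by
    have := ENNReal.toReal_mono ENNReal.ofReal_ne_top hq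
    rwa [ENNReal.toReal_ofReal hε0] at this
  have hμB : μ B = ENNReal.ofReal q := (ENNReal.ofReal_toReal hμBne).symm
  have hμBc : μ Bᶜ = ENNReal.ofReal (1 - q) := by
    rw [measure_compl hB hμBne, measure_univ, hμB,
      ENNReal.ofReal_sub 1 hq0, ENNReal.ofReal_one]
  -- the boxes
  set box : Finset (Fin K) → Set (Fin K → α) :=
    fun A => Set.pi Set.univ (fun k => if k ∈ A then B else Bᶜ) with hbox
  set 𝒜 : Finset (Finset (Fin K)) :=
    (Finset.univ : Finset (Fin K)).powerset.filter (fun A => K ≤ 2 * A.card) with h𝒜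
  have hsub : {ξ : Fin K → α | K ≤ 2 * (Finset.univ.filter fun k => ξ k ∈ B).card}
      ⊆ ⋃ A ∈ 𝒜, box A := by
    intro ξ hξ
    simp only [Set.mem_setOf_eq] at hξ
    have hmem : (Finset.univ.filter fun k => ξ k ∈ B) ∈ 𝒜 := by
      simp only [h𝒜, Finset.mem_filter, Finset.mem_powerset]
      exact ⟨Finset.subset_univ _, hξ⟩
    refine Set.mem_biUnion hmem ?_
    intro k _
    by_cases hk : ξ k ∈ B <;> simp [hk]
  refine le_trans (measure_mono hsub) ?_
  refine le_trans (measure_biUnion_finset_le 𝒜 box) ?_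
  have hboxval : ∀ A ∈ 𝒜, (Measure.pi fun _ : Fin K => μ) (box A)
      = ENNReal.ofReal q ^ A.card * ENNReal.ofReal (1 - q) ^ (K - A.card) := by
    intro A _
    rw [hbox]
    rw [Measure.pi_pi]
    have : ∀ k : Fin K, μ (if k ∈ A then B else Bᶜ)
        = if k ∈ A then ENNReal.ofReal q else ENNReal.ofReal (1 - q) := by
      intro k; by_cases hk : k ∈ A <;> simp [hk, hμB, hμBc]
    rw [Finset.prod_congr rfl fun k _ => this k, Finset.prod_ite, Finset.prod_const,
      Finset.prod_const]
    congr 2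
    · rw [show Finset.univ.filter (fun k => k ∈ A) = A by ext k; simp]
    · rw [show Finset.univ.filter (fun k => ¬ k ∈ A) = Finset.univ \ A by ext k; simp,
        Finset.card_sdiff_of_subset (Finset.subset_univ A), Finset.card_univ, Fintype.card_fin]
  rw [Finset.sum_congr rfl hboxval]
  -- group by cardinality
  have hgroup : (∑ A ∈ 𝒜, ENNReal.ofReal q ^ A.card * ENNReal.ofReal (1 - q) ^ (K - A.card))
      = ∑ m ∈ Finset.Icc ((K + 1) / 2) K,
          (K.choose m) • (ENNReal.ofReal q ^ m * ENNReal.ofReal (1 - q) ^ (K - m)) := by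
    rw [h𝒜, Finset.sum_filter]
    have := Finset.sum_powerset_apply_card
      (f := fun m => if K ≤ 2 * m then ENNReal.ofReal q ^ m * ENNReal.ofReal (1 - q) ^ (K - m) else 0)
      (x := (Finset.univ : Finset (Fin K)))
    rw [this, Finset.card_univ, Fintype.card_fin]
    rw [show Finset.Icc ((K + 1) / 2) K = (Finset.range (K + 1)).filter (fun m => K ≤ 2 * m) by
      ext m; simp [Finset.mem_Icc, Finset.mem_range]; omega]
    rw [Finset.sum_filter]
    refine Finset.sum_congr rfl fun m _ => ?_
    by_cases hm : K ≤ 2 * m <;> simp [hm]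
  rw [hgroup]
  have hterm : ∀ m ∈ Finset.Icc ((K + 1) / 2) K,
      (K.choose m) • (ENNReal.ofReal q ^ m * ENNReal.ofReal (1 - q) ^ (K - m))
      = ENNReal.ofReal ((K.choose m : ℝ) * q ^ m * (1 - q) ^ (K - m)) := by
    intro m _
    rw [← ENNReal.ofReal_pow hq0, ← ENNReal.ofReal_pow (by linarith : (0:ℝ) ≤ 1 - q),
      ← ENNReal.ofReal_mul (by positivity), nsmul_eq_mul,
      ← ENNReal.ofReal_natCast (K.choose m), ← ENNReal.ofReal_mul (by positivity)]
    ring_nf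
  rw [Finset.sum_congr rfl hterm, ← ENNReal.ofReal_sum_of_nonneg]
  · refine ENNReal.ofReal_le_ofReal ?_
    exact binTail_mono K hq0 hqε hε1 _
  · intro m _
    have : (0:ℝ) ≤ 1 - q := by linarith
    positivity


lemma dps_nonneg {n : ℕ} (v : Fin n → ℝ) : 0 ≤ v ⬝ᵥ v :=
  Finset.sum_nonneg fun i _ => mul_self_nonneg _

lemma meas_dot {n : ℕ} (w : Fin n → ℝ) : Measurable (fun v : Fin n → ℝ => w ⬝ᵥ v) :=
  by unfold dotProduct; fun_prop

lemma integrable_of_integral_one {α : Type*} [MeasurableSpace α] {μ : Measure α} {f : α → ℝ}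
    (h : (∫ x, f x ∂μ) = 1) : Integrable f μ := by
  by_contra hc
  rw [integral_undef hc] at h
  norm_num at h

lemma varIneq {n : ℕ} {X : Set (Fin n → ℝ)} (hcv : Convex ℝ X) {a b : Fin n → ℝ}
    (ha : a ∈ X)
    (hmin : ∀ y ∈ X, (a - b) ⬝ᵥ (a - b) ≤ (y - b) ⬝ᵥ (y - b)) :
    ∀ x ∈ X, 0 ≤ (a - b) ⬝ᵥ (x - a) := by
  intro x hx
  set d := a - b with hd
  set u := x - a with hu
  set A := d ⬝ᵥ u with hA
  set Bq := u ⬝ᵥ u with hB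
  have hB0 : 0 ≤ Bq := dps_nonneg u
  have key : ∀ t : ℝ, 0 < t → t ≤ 1 → 0 ≤ 2 * A + t * Bq := by
    intro t ht0 ht1
    have hy : a + t • u ∈ X := by
      have h2 := hcv ha hx (by linarith : (0:ℝ) ≤ 1 - t) (le_of_lt ht0) (by ring)
      convert h2 using 1
      rw [hu]
      module
    have h2 := hmin _ hy
    have hexp : (a + t • u - b) ⬝ᵥ (a + t • u - b)
        = d ⬝ᵥ d + 2 * t * A + t ^ 2 * Bq := by
      have hrw : a + t • u - b = d + t • u := by rw [hd]; module
      rw [hrw, hA, hB]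
      simp only [add_dotProduct, dotProduct_add, smul_dotProduct, dotProduct_smul,
        smul_eq_mul]
      rw [dotProduct_comm u d]
      ring
    rw [hexp] at h2
    by_contra hcon
    push_neg at hcon
    nlinarith [mul_pos ht0 (by linarith : (0:ℝ) < -(2 * A + t * Bq))]
  by_contra hcon
  push_neg at hcon
  set t : ℝ := min 1 ((-A) / (Bq + 1)) with ht
  have ht0 : 0 < t := lt_min one_pos (div_pos (by linarith) (by linarith))
  have ht1 : t ≤ 1 := min_le_left _ _
  have h1 : t ≤ (-A) / (Bq + 1) := min_le_right _ _
  have h2 : t * Bq ≤ ((-A) / (Bq + 1)) * Bq := mul_le_mul_of_nonneg_right h1 hB0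
  have h3 : ((-A) / (Bq + 1)) * Bq ≤ -A := by
    rw [div_mul_eq_mul_div, div_le_iff₀ (by linarith)]
    nlinarith
  have := key t ht0 ht1
  linarith

lemma dMeas_apply {n : ℕ} {p : (Fin n → ℝ) → ℝ} (hp : IsDensity p) {S : Set (Fin n → ℝ)}
    (hS : MeasurableSet S) : dMeas p S = ENNReal.ofReal (∫ x in S, p x) := by
  have hint : Integrable p := integrable_of_integral_one hp.2
  rw [dMeas, withDensity_apply _ hS,
    ← ofReal_integral_eq_lintegral_ofReal hint.restrict (ae_of_all _ hp.1)]

lemma dMeas_prob {n : ℕ} {p : (Fin n → ℝ) → ℝ} (hp : IsDensity p) :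
    IsProbabilityMeasure (dMeas p) := by
  constructor
  have h1 := dMeas_apply hp MeasurableSet.univ
  rw [Measure.restrict_univ] at h1
  rw [h1, hp.2, ENNReal.ofReal_one]

end AuxLemmas

/-- the risk of the `K`-observation majority test (accept `H₁` iff
`s*(ω_k) ≥ 0` for at least `K/2` indices `k`) on stationary `K`-repeated observations
`ω_k = x + ξ_k`, `ξ_k` i.i.d. `∼ p ∈ P_γ`, is bounded by the binomial tail
`Σ_{K ≥ k ≥ K/2} C(K,k) ε⋆^k (1−ε⋆)^{K−k}` with `ε⋆ = ∫_δ^∞ γ`. -/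
theorem statement8 {n K : ℕ} (γ : ℝ → ℝ) (hγ : IsSpec γ)
    (X₁ X₂ : Set (Fin n → ℝ))
    (hne1 : X₁.Nonempty) (hne2 : X₂.Nonempty)
    (hcv1 : Convex ℝ X₁) (hcv2 : Convex ℝ X₂)
    (hcl1 : IsClosed X₁) (hcl2 : IsClosed X₂)
    (hbd : Bornology.IsBounded X₁ ∨ Bornology.IsBounded X₂)
    (hdisj : Disjoint X₁ X₂)
    (x1 x2 : Fin n → ℝ) (hx1 : x1 ∈ X₁) (hx2 : x2 ∈ X₂)
    (hmin : ∀ y1 ∈ X₁, ∀ y2 ∈ X₂,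
      (x1 - x2) ⬝ᵥ (x1 - x2) ≤ (y1 - y2) ⬝ᵥ (y1 - y2))
    (δ : ℝ) (hδ : δ = Real.sqrt ((x1 - x2) ⬝ᵥ (x1 - x2)) / 2)
    (h : Fin n → ℝ) (hh : h = (Real.sqrt ((x1 - x2) ⬝ᵥ (x1 - x2)))⁻¹ • (x1 - x2))
    (c : ℝ) (hc : c = h ⬝ᵥ (x1 + x2) / 2)
    (ε : ℝ) (hε : ε = tailP γ δ) :
    (∀ x ∈ X₁, ∀ p : (Fin n → ℝ) → ℝ, SubSpherical γ p →
      (Measure.pi fun _ : Fin K => dMeas p)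
        {ξ : Fin K → Fin n → ℝ |
          ¬ K ≤ 2 * (Finset.univ.filter fun k : Fin K => 0 ≤ h ⬝ᵥ (x + ξ k) - c).card}
        ≤ ENNReal.ofReal (∑ k ∈ (Finset.range (K + 1)).filter fun k => K ≤ 2 * k,
            (K.choose k : ℝ) * ε ^ k * (1 - ε) ^ (K - k))) ∧
    (∀ x ∈ X₂, ∀ p : (Fin n → ℝ) → ℝ, SubSpherical γ p →
      (Measure.pi fun _ : Fin K => dMeas p)
        {ξ : Fin K → Fin n → ℝ |
          K ≤ 2 * (Finset.univ.filter fun k : Fin K => 0 ≤ h ⬝ᵥ (x + ξ k) - c).card}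
        ≤ ENNReal.ofReal (∑ k ∈ (Finset.range (K + 1)).filter fun k => K ≤ 2 * k,
            (K.choose k : ℝ) * ε ^ k * (1 - ε) ^ (K - k))) := by
  
  obtain ⟨⟨hγ0, hγ1⟩, -, -⟩ := hγ
  have hγint : Integrable γ := integrable_of_integral_one hγ1
  set d : Fin n → ℝ := x1 - x2 with hddef
  have hd : d ≠ 0 := by
    intro h0
    have hx12 : x1 = x2 := by rwa [hddef, sub_eq_zero] at h0
    exact Set.disjoint_left.mp hdisj hx1 (hx12 ▸ hx2)
  have hdd : 0 < d ⬝ᵥ d :=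
    lt_of_le_of_ne (dps_nonneg d) fun e => hd (dotProduct_self_eq_zero.mp e.symm)
  set D : ℝ := Real.sqrt (d ⬝ᵥ d) with hDdef
  have hD : 0 < D := Real.sqrt_pos.mpr hdd
  have hD2 : D * D = d ⬝ᵥ d := Real.mul_self_sqrt (le_of_lt hdd)
  have hδD : δ = D / 2 := hδ
  have hδ0 : 0 ≤ δ := by rw [hδD]; positivity
  -- ε bounds
  have hε0 : 0 ≤ ε := by
    rw [hε, tailP]
    exact setIntegral_nonneg measurableSet_Ici fun s _ => hγ0 s
  have hε1 : ε ≤ 1 := by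
    rw [hε, tailP, ← hγ1]
    exact setIntegral_le_integral hγint (ae_of_all _ hγ0)
  -- unit vector
  have hunit : h ⬝ᵥ h = 1 := by
    rw [hh, smul_dotProduct, dotProduct_smul, smul_eq_mul, smul_eq_mul, ← hD2]
    field_simp
  -- scalar abbreviations
  have hhx : ∀ v : Fin n → ℝ, h ⬝ᵥ v = D⁻¹ * (d ⬝ᵥ v) := by
    intro v
    rw [hh, smul_dotProduct, smul_eq_mul]
  have hB1B2 : d ⬝ᵥ d = d ⬝ᵥ x1 - d ⬝ᵥ x2 := by
    rw [hddef]
    simp [dotProduct_sub]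
  have hcval : c = D⁻¹ * (d ⬝ᵥ x1 + d ⬝ᵥ x2) / 2 := by
    rw [hc, hhx, dotProduct_add]
  -- geometry
  have geom1 : ∀ x ∈ X₁, c + δ ≤ h ⬝ᵥ x := by
    intro x hx
    have hv : 0 ≤ d ⬝ᵥ x - d ⬝ᵥ x1 := by
      have := varIneq hcv1 hx1 (fun y hy => hmin y hy x2 hx2) x hx
      rwa [← hddef, dotProduct_sub] at this
    rw [hhx, hcval, hδD, ← sub_nonneg]
    have hkey : D⁻¹ * (d ⬝ᵥ x) - (D⁻¹ * (d ⬝ᵥ x1 + d ⬝ᵥ x2) / 2 + D / 2)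
        = D⁻¹ * (d ⬝ᵥ x - d ⬝ᵥ x1) := by
      field_simp
      nlinarith [hD2, hB1B2]
    rw [hkey]
    positivity
  have geom2 : ∀ x ∈ X₂, h ⬝ᵥ x ≤ c - δ := by
    intro x hx
    have hmin2 : ∀ y ∈ X₂, (x2 - x1) ⬝ᵥ (x2 - x1) ≤ (y - x1) ⬝ᵥ (y - x1) := by
      intro y hy
      have h1 := hmin x1 hx1 y hy
      have e1 : (x2 - x1) ⬝ᵥ (x2 - x1) = (x1 - x2) ⬝ᵥ (x1 - x2) := by
        rw [show x2 - x1 = -(x1 - x2) by ring, neg_dotProduct, dotProduct_neg, neg_neg]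
      have e2 : (x1 - y) ⬝ᵥ (x1 - y) = (y - x1) ⬝ᵥ (y - x1) := by
        rw [show x1 - y = -(y - x1) by ring, neg_dotProduct, dotProduct_neg, neg_neg]
      rw [e1, ← e2]
      exact h1
    have hv : 0 ≤ d ⬝ᵥ x2 - d ⬝ᵥ x := by
      have := varIneq hcv2 hx2 hmin2 x hx
      rw [show x2 - x1 = -d by rw [hddef]; ring, neg_dotProduct, dotProduct_sub] at this
      linarith
    rw [hhx, hcval, hδD, ← sub_nonneg]
    have hkey : D⁻¹ * (d ⬝ᵥ x1 + d ⬝ᵥ x2) / 2 - D / 2 - D⁻¹ * (d ⬝ᵥ x)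
        = D⁻¹ * (d ⬝ᵥ x2 - d ⬝ᵥ x) := by
      field_simp
      nlinarith [hD2, hB1B2]
    rw [hkey]
    positivity
  -- common RHS rewrite
  have hRHS : (∑ k ∈ (Finset.range (K + 1)).filter (fun k => K ≤ 2 * k),
      (K.choose k : ℝ) * ε ^ k * (1 - ε) ^ (K - k)) = binTail K ((K + 1) / 2) ε := by
    rw [binTail]
    refine Finset.sum_congr ?_ fun _ _ => rfl
    ext m
    simp only [Finset.mem_filter, Finset.mem_range, Finset.mem_Icc]
    omega
  constructor
  · intro x hx p hp
    obtain ⟨hpd, hpe, hps⟩ := hp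
    haveI := dMeas_prob hpd
    set B : Set (Fin n → ℝ) := {v | h ⬝ᵥ v < c - h ⬝ᵥ x} with hBdef
    have hBmeas : MeasurableSet B := measurableSet_lt (meas_dot h) measurable_const
    have hμB : dMeas p B ≤ ENNReal.ofReal ε := by
      have hsub2 : B ⊆ {v : Fin n → ℝ | δ ≤ (-h) ⬝ᵥ v} := by
        intro v hv
        simp only [hBdef, Set.mem_setOf_eq] at hv ⊢
        rw [neg_dotProduct]
        have := geom1 x hx
        linarith
      refine le_trans (measure_mono hsub2) ?_
      rw [dMeas_apply hpd (measurableSet_le measurable_const (meas_dot (-h)))]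
      refine ENNReal.ofReal_le_ofReal ?_
      rw [hε]
      exact hps (-h) (by rw [neg_dotProduct, dotProduct_neg, neg_neg, hunit]) δ hδ0
    have hsub : {ξ : Fin K → Fin n → ℝ |
        ¬ K ≤ 2 * (Finset.univ.filter fun k : Fin K => 0 ≤ h ⬝ᵥ (x + ξ k) - c).card}
        ⊆ {ξ : Fin K → Fin n → ℝ | K ≤ 2 * (Finset.univ.filter fun k => ξ k ∈ B).card} := by
      intro ξ hξ
      simp only [Set.mem_setOf_eq] at hξ ⊢
      have hfeq : (Finset.univ.filter fun k => ξ k ∈ B)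
          = Finset.univ.filter fun k => ¬ (0 ≤ h ⬝ᵥ (x + ξ k) - c) := by
        refine Finset.filter_congr fun k _ => ?_
        simp only [hBdef, Set.mem_setOf_eq, dotProduct_add, not_le]
        constructor <;> intro <;> linarith
      have hcards := Finset.card_filter_add_card_filter_not
        (s := (Finset.univ : Finset (Fin K)))
        (p := fun k => 0 ≤ h ⬝ᵥ (x + ξ k) - c)
      rw [Finset.card_univ, Fintype.card_fin] at hcards
      rw [hfeq]
      omega
    refine le_trans (measure_mono hsub) ?_
    rw [hRHS]
    exact majority_bound (dMeas p) K hBmeas hε0 hε1 hμB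
  · intro x hx p hp
    obtain ⟨hpd, hpe, hps⟩ := hp
    haveI := dMeas_prob hpd
    set B : Set (Fin n → ℝ) := {v | c - h ⬝ᵥ x ≤ h ⬝ᵥ v} with hBdef
    have hBmeas : MeasurableSet B := measurableSet_le measurable_const (meas_dot h)
    have hμB : dMeas p B ≤ ENNReal.ofReal ε := by
      have hsub2 : B ⊆ {v : Fin n → ℝ | δ ≤ h ⬝ᵥ v} := by
        intro v hv
        simp only [hBdef, Set.mem_setOf_eq] at hv ⊢
        have := geom2 x hx
        linarith
      refine le_trans (measure_mono hsub2) ?_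
      rw [dMeas_apply hpd (measurableSet_le measurable_const (meas_dot h))]
      refine ENNReal.ofReal_le_ofReal ?_
      rw [hε]
      exact hps h hunit δ hδ0
    have hsub : {ξ : Fin K → Fin n → ℝ |
        K ≤ 2 * (Finset.univ.filter fun k : Fin K => 0 ≤ h ⬝ᵥ (x + ξ k) - c).card}
        ⊆ {ξ : Fin K → Fin n → ℝ | K ≤ 2 * (Finset.univ.filter fun k => ξ k ∈ B).card} := by
      intro ξ hξ
      simp only [Set.mem_setOf_eq] at hξ ⊢
      have hfeq : (Finset.univ.filter fun k => ξ k ∈ B)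
          = Finset.univ.filter fun k => 0 ≤ h ⬝ᵥ (x + ξ k) - c := by
        refine Finset.filter_congr fun k _ => ?_
        simp only [hBdef, Set.mem_setOf_eq, dotProduct_add]
        constructor <;> intro <;> linarith
      rw [hfeq]
      exact hξ
    refine le_trans (measure_mono hsub) ?_
    rw [hRHS]
    exact majority_bound (dMeas p) K hBmeas hε0 hε1 hμB
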